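/- Let K be a field of characteristic zero containing elements q (with q not a root of unity) and t^{1/2}, and let V(X) = (t^{1/2} X - t^{-1/2} X⁻¹)/(X - X⁻¹) as a rational function. Define operators on K(X): x̂(f) = (X + X⁻¹) f, ŷ(f) = V(X) f(qX) + V(X⁻¹) f(q⁻¹X), ẑ(f) = q^{-1/2} X⁻¹ V(X) f(qX) + q^{-1/2} X V(X⁻¹) f(q⁻¹X). Then q^{1/2} x̂ ŷ - q^{-1/2} ŷ x̂ = (q - q⁻¹) ẑ as operators on K(X). -/
import Mathlib


/-- The polynomial-representation operators `x̂, ŷ, ẑ` of the spherical DAHA of type `A₁`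
on the function field `K(X)` (an abstract field `L` with automorphism `ϖ : X ↦ qX`)
satisfy `q^{1/2} x̂ŷ - q^{-1/2} ŷx̂ = (q - q⁻¹) ẑ`. -/
theorem daha_A1_relation_xy (K L : Type*) [Field K] [CharZero K] [Field L] [Algebra K L]
    (q s p : K) (hq : q ≠ 0) (hs : s ≠ 0)
    (hqroot : ∀ n : ℕ, 0 < n → q ^ n ≠ 1) (hp : p ^ 2 = q)
    (X : L) (hX : X ≠ 0)
    (ϖ : L ≃ₐ[K] L) (hϖX : ϖ X = algebraMap K L q * X)
    (V V' : L)
    (hV : V = (algebraMap K L s * X - (algebraMap K L s)⁻¹ * X⁻¹) / (X - X⁻¹))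
    (hV' : V' = (algebraMap K L s * X⁻¹ - (algebraMap K L s)⁻¹ * X) / (X⁻¹ - X))
    (xop yop zop : L → L)
    (hx : ∀ f, xop f = (X + X⁻¹) * f)
    (hy : ∀ f, yop f = V * ϖ f + V' * ϖ.symm f)
    (hz : ∀ f, zop f = (algebraMap K L p)⁻¹ * X⁻¹ * V * ϖ f
      + (algebraMap K L p)⁻¹ * X * V' * ϖ.symm f) :
    ∀ f : L,
      algebraMap K L p * xop (yop f) - (algebraMap K L p)⁻¹ * yop (xop f)
        = (algebraMap K L q - (algebraMap K L q)⁻¹) * zop f := by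
  intro f
  set Q := algebraMap K L q with hQ
  set P := algebraMap K L p with hP
  have hp0 : p ≠ 0 := by
    intro h; apply hq; rw [← hp, h]; ring
  have hQ0 : Q ≠ 0 := by
    simpa [hQ] using (map_ne_zero_iff _ (algebraMap K L).injective).2 hq
  have hP0 : P ≠ 0 := by
    simpa [hP] using (map_ne_zero_iff _ (algebraMap K L).injective).2 hp0
  have hPQ : P * P = Q := by
    rw [hP, hQ, ← map_mul, ← hp]; ring_nf
  have hϖXinv : ϖ X⁻¹ = Q⁻¹ * X⁻¹ := by
    rw [map_inv₀, hϖX, mul_inv]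
  have hsX : ϖ.symm X = Q⁻¹ * X := by
    have h := ϖ.symm_apply_apply X
    rw [hϖX] at h
    have h2 : Q * ϖ.symm X = X := by
      have := ϖ.symm.commutes q
      calc Q * ϖ.symm X = ϖ.symm (algebraMap K L q) * ϖ.symm X := by
            rw [this]
        _ = ϖ.symm (algebraMap K L q * X) := by rw [map_mul]
        _ = X := h
    field_simp at h2 ⊢
    linear_combination h2
  have hsXinv : ϖ.symm X⁻¹ = Q * X⁻¹ := by
    rw [map_inv₀, hsX, mul_inv, inv_inv]
  rw [hx, hx, hy, hy, hz]
  rw [map_mul, map_add, map_mul, map_add, hϖX, hϖXinv, hsX, hsXinv]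
  field_simp
  rw [show Q = P * P from hPQ.symm]
  ring
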